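/- Let d: [n] × [n] → ℝ be a function with matrix D = (-d(i,j)). Then d is a semimetric if and only if D is a max-plus idempotent of tropical rank n with all off-diagonal entries negative. -/

import Mathlib

open scoped BigOperators

/-- Max-plus matrix product over ℝ. -/
noncomputable def tmul {n : ℕ} (A B : Fin n → Fin n → ℝ) : Fin n → Fin n → ℝ :=
  fun i j => ⨆ k, A i k + B k j

/-- Max-plus idempotency. -/
def IsTropIdem {n : ℕ} (A : Fin n → Fin n → ℝ) : Prop := tmul A A = A

/-- Tropical permanent. -/
noncomputable def tperm {n : ℕ} (A : Fin n → Fin n → ℝ) : ℝ :=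
  ⨆ σ : Equiv.Perm (Fin n), ∑ i, A i (σ i)

/-- The tropical permanent is attained by a unique permutation. -/
def UniqPerm {n : ℕ} (A : Fin n → Fin n → ℝ) : Prop :=
  ∃! σ : Equiv.Perm (Fin n), ∑ i, A i (σ i) = tperm A

/-- Tropical rank: the largest size of a square minor whose tropical
permanent is attained by a unique permutation. -/
noncomputable def tropRank {n : ℕ} (A : Fin n → Fin n → ℝ) : ℕ :=
  sSup {k : ℕ | ∃ r c : Fin k ↪ Fin n, UniqPerm (fun i j => A (r i) (c j))}

/-- Column space: all max-plus linear combinations of the columns. -/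
def colSpace {n : ℕ} (A : Fin n → Fin n → ℝ) : Set (Fin n → ℝ) :=
  {x | ∃ lam : Fin n → ℝ, ∀ i, x i = ⨆ j, lam j + A i j}

/-- Residuation distance δ(x,y) = max_k (x_k - y_k). -/
noncomputable def tdelta {n : ℕ} (x y : Fin n → ℝ) : ℝ := ⨆ k, (x k - y k)

/-- Residuation operator ⟨x∣y⟩ = min_k (y_k - x_k). -/
noncomputable def tresid {n : ℕ} (x y : Fin n → ℝ) : ℝ := ⨅ k, (y k - x k)

/-- Tropical Hilbert projective metric. -/
noncomputable def tHilbert {n : ℕ} (x y : Fin n → ℝ) : ℝ :=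
  (tdelta x y + tdelta y x) / 2

/- ### Auxiliary lemmas -/

lemma finBdd {α : Type*} [Finite α] (f : α → ℝ) : BddAbove (Set.range f) :=
  (Set.finite_range f).bddAbove

lemma sum_swap_diff {n : ℕ} (D : Fin n → Fin n → ℝ) (τ : Equiv.Perm (Fin n))
    (a b : Fin n) (hab : a ≠ b) :
    ∑ i, D i ((τ * Equiv.swap a b) i) =
      ∑ i, D i (τ i) + (D a (τ b) + D b (τ a)) - (D a (τ a) + D b (τ b)) := by
  have key : ∑ i, (D i ((τ * Equiv.swap a b) i) - D i (τ i)) =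
      (D a (τ b) + D b (τ a)) - (D a (τ a) + D b (τ b)) := by
    have h1 : ∑ i, (D i ((τ * Equiv.swap a b) i) - D i (τ i)) =
        ∑ i ∈ ({a, b} : Finset (Fin n)), (D i ((τ * Equiv.swap a b) i) - D i (τ i)) := by
      refine (Finset.sum_subset (Finset.subset_univ _) ?_).symm
      intro i _ hi
      simp only [Finset.mem_insert, Finset.mem_singleton, not_or] at hi
      have : (τ * Equiv.swap a b) i = τ i := by
        simp [Equiv.Perm.mul_apply, Equiv.swap_apply_of_ne_of_ne hi.1 hi.2]
      rw [this, sub_self]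
    rw [h1, Finset.sum_pair hab]
    simp [Equiv.Perm.mul_apply]
    ring
  have h2 : ∑ i, (D i ((τ * Equiv.swap a b) i) - D i (τ i)) =
      ∑ i, D i ((τ * Equiv.swap a b) i) - ∑ i, D i (τ i) := Finset.sum_sub_distrib _ _
  rw [h2] at key
  linarith

lemma trop_tri {n : ℕ} (D : Fin n → Fin n → ℝ) (idem : IsTropIdem D) :
    ∀ i j k, D i k + D k j ≤ D i j := by
  intro i j k
  have h := congrFun (congrFun idem i) j
  rw [← h]
  unfold tmul
  exact le_ciSup (f := fun k => D i k + D k j) (finBdd _) k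

lemma diag_zero {n : ℕ} (hn : 0 < n) (D : Fin n → Fin n → ℝ)
    (idem : IsTropIdem D) (uniq : UniqPerm D) : ∀ i, D i i = 0 := by
  haveI : Nonempty (Fin n) := ⟨⟨0, hn⟩⟩
  have tri : ∀ i j k, D i k + D k j ≤ D i j := trop_tri D idem
  have att : ∀ i j, ∃ k, D i j = D i k + D k j := by
    intro i j
    obtain ⟨k, hk⟩ := Finite.exists_max (fun k => D i k + D k j)
    refine ⟨k, ?_⟩
    have h := congrFun (congrFun idem i) j
    rw [← h]
    unfold tmul
    exact le_antisymm (ciSup_le hk) (le_ciSup (f := fun k => D i k + D k j) (finBdd _) k)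
  have diag_le : ∀ i, D i i ≤ 0 := by
    intro i; have := tri i i i; linarith
  obtain ⟨σ, hσ, huniq⟩ := uniq
  have hle : ∀ τ : Equiv.Perm (Fin n), ∑ i, D i (τ i) ≤ tperm D := by
    intro τ; unfold tperm
    exact le_ciSup (f := fun σ : Equiv.Perm (Fin n) => ∑ i, D i (σ i)) (finBdd _) τ
  have hlt : ∀ τ : Equiv.Perm (Fin n), τ ≠ σ → ∑ i, D i (τ i) < tperm D := by
    intro τ hτ
    exact lt_of_le_of_ne (hle τ) (fun h => hτ (huniq τ h))
  have moved_diag : ∀ a, σ a ≠ a → D (σ a) (σ a) < 0 := by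
    intro a ha
    set b := σ a with hb
    have hab : a ≠ b := by intro h; exact ha (hb ▸ h.symm)
    have hπ : σ * Equiv.swap a b ≠ σ := by
      intro h
      have : (σ * Equiv.swap a b) a = σ a := by rw [h]
      simp only [Equiv.Perm.mul_apply, Equiv.swap_apply_left] at this
      exact hab (σ.injective this).symm
    have h1 := hlt _ hπ
    rw [sum_swap_diff D σ a b hab, hσ] at h1
    have h2 := tri a (σ b) b
    have h3 : D b (σ a) = D b b := by rw [← hb]
    have h4 : D a (σ a) = D a b := by rw [← hb]
    linarith
  have sigma_id : σ = 1 := by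
    by_contra hne
    have : ∃ a, σ a ≠ a := by
      by_contra h
      push_neg at h
      exact hne (Equiv.ext h)
    obtain ⟨a, ha⟩ := this
    set b := σ a with hb
    have hbb : D b b < 0 := moved_diag a ha
    obtain ⟨k, hk⟩ := att a b
    have hkb : k ≠ b := by
      intro h
      rw [h] at hk
      have := tri a b b
      linarith
    set p := σ.symm k with hp
    have hσp : σ p = k := σ.apply_symm_apply k
    have hap : a ≠ p := by
      intro h
      rw [← h] at hσp
      apply hkb
      rw [← hσp, hb]
    have hπ : σ * Equiv.swap a p ≠ σ := by
      intro h
      have : (σ * Equiv.swap a p) a = σ a := by rw [h]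
      simp only [Equiv.Perm.mul_apply, Equiv.swap_apply_left] at this
      rw [hσp] at this
      exact hkb (this.trans hb.symm)
    have h1 := hlt _ hπ
    rw [sum_swap_diff D σ a p hap, hσ] at h1
    have h2 := tri p b k
    rw [hσp, ← hb] at h1
    linarith
  intro i
  refine le_antisymm (diag_le i) ?_
  by_contra hii
  push_neg at hii
  obtain ⟨k, hk⟩ := att i i
  have hki : i ≠ k := by
    intro h; rw [← h] at hk; linarith
  have hπ : σ * Equiv.swap i k ≠ σ := by
    intro h
    have : (σ * Equiv.swap i k) i = σ i := by rw [h]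
    simp only [Equiv.Perm.mul_apply, Equiv.swap_apply_left] at this
    exact hki (σ.injective this).symm
  have h1 := hlt _ hπ
  rw [sum_swap_diff D σ i k hki, hσ] at h1
  rw [sigma_id] at h1
  simp only [Equiv.Perm.coe_one, id_eq, Equiv.Perm.one_apply] at h1
  have := diag_le k
  linarith

lemma uniq_zero {n : ℕ} (D : Fin n → Fin n → ℝ) :
    UniqPerm (fun (i j : Fin 0) => D ((Function.Embedding.ofIsEmpty (α := Fin 0)) i)
      ((Function.Embedding.ofIsEmpty (α := Fin 0)) j)) := by
  have ht : tperm (fun (i j : Fin 0) => D ((Function.Embedding.ofIsEmpty (α := Fin 0)) i)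
      ((Function.Embedding.ofIsEmpty (α := Fin 0)) j)) = 0 := by
    unfold tperm
    simp
  refine ⟨1, ?_, ?_⟩
  · rw [ht]; simp
  · intro y _
    ext x
    exact x.elim0

lemma rank_mem_bdd {n : ℕ} (D : Fin n → Fin n → ℝ) :
    BddAbove {k : ℕ | ∃ r c : Fin k ↪ Fin n, UniqPerm (fun i j => D (r i) (c j))} := by
  refine ⟨n, ?_⟩
  rintro k ⟨r, c, -⟩
  simpa using Fintype.card_le_of_embedding r

lemma uniq_of_rank {n : ℕ} (D : Fin n → Fin n → ℝ) (hrank : tropRank D = n) :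
    UniqPerm D := by
  have h0 : (0 : ℕ) ∈ {k : ℕ | ∃ r c : Fin k ↪ Fin n, UniqPerm (fun i j => D (r i) (c j))} :=
    ⟨Function.Embedding.ofIsEmpty, Function.Embedding.ofIsEmpty, uniq_zero D⟩
  have hmem : n ∈ {k : ℕ | ∃ r c : Fin k ↪ Fin n, UniqPerm (fun i j => D (r i) (c j))} := by
    have h1 := Nat.sSup_mem ⟨0, h0⟩ (rank_mem_bdd D)
    rwa [show sSup {k : ℕ | ∃ r c : Fin k ↪ Fin n, UniqPerm (fun i j => D (r i) (c j))} = tropRank D from rfl, hrank] at h1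
  obtain ⟨r, c, hU⟩ := hmem
  set ρ : Fin n ≃ Fin n := Equiv.ofBijective r (Finite.injective_iff_bijective.mp r.injective) with hρ
  set γ : Fin n ≃ Fin n := Equiv.ofBijective c (Finite.injective_iff_bijective.mp c.injective) with hγ
  have hρa : ∀ i, ρ i = r i := fun i => rfl
  have hγa : ∀ i, γ i = c i := fun i => rfl
  set Φ : Equiv.Perm (Fin n) → Equiv.Perm (Fin n) := fun σ => ρ.symm.trans (σ.trans γ) with hΦ
  set Ψ : Equiv.Perm (Fin n) → Equiv.Perm (Fin n) := fun τ => ρ.trans (τ.trans γ.symm) with hΨ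
  have hΦΨ : ∀ τ, Φ (Ψ τ) = τ := by
    intro τ; ext j; simp [hΦ, hΨ]
  have hsum : ∀ σ : Equiv.Perm (Fin n),
      ∑ i, D (r i) (c (σ i)) = ∑ j, D j ((Φ σ) j) := by
    intro σ
    rw [← Equiv.sum_comp ρ (fun j => D j ((Φ σ) j))]
    apply Finset.sum_congr rfl
    intro i _
    have h5 : ρ.symm (r i) = i := by rw [← hρa i, Equiv.symm_apply_apply]
    simp [hΦ, hρa, hγa, h5]
  have htp : tperm (fun i j => D (r i) (c j)) = tperm D := by
    apply le_antisymm
    · apply ciSup_le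
      intro σ
      calc ∑ i, D (r i) (c (σ i)) = ∑ j, D j ((Φ σ) j) := hsum σ
        _ ≤ tperm D := le_ciSup (f := fun σ : Equiv.Perm (Fin n) => ∑ i, D i (σ i)) (finBdd _) (Φ σ)
    · apply ciSup_le
      intro τ
      have h2 : ∑ j, D j (τ j) = ∑ i, D (r i) (c ((Ψ τ) i)) := by
        rw [hsum (Ψ τ), hΦΨ τ]
      rw [h2]
      exact le_ciSup (f := fun σ : Equiv.Perm (Fin n) => ∑ i, D (r i) (c (σ i))) (finBdd _) (Ψ τ)
  obtain ⟨σ0, hσ0, huniq0⟩ := hU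
  refine ⟨Φ σ0, ?_, ?_⟩
  · show ∑ i, D i ((Φ σ0) i) = tperm D
    rw [← hsum σ0]
    exact hσ0.trans htp
  · intro τ hτ
    have hτ' : ∑ i, D i (τ i) = tperm D := hτ
    have h3 : ∑ i, D (r i) (c ((Ψ τ) i)) = tperm (fun i j => D (r i) (c j)) := by
      rw [hsum (Ψ τ), hΦΨ τ, hτ']
      exact htp.symm
    have h4 := huniq0 (Ψ τ) h3
    rw [← hΦΨ τ, h4]

theorem stmt12 (n : ℕ) (hn : 0 < n) (d : Fin n → Fin n → ℝ)
    (D : Fin n → Fin n → ℝ) (hD : ∀ i j, D i j = -d i j) :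
    ((∀ i, d i i = 0) ∧ (∀ i j k, d i j ≤ d i k + d k j) ∧
     (∀ i j, 0 ≤ d i j) ∧ (∀ i j, i ≠ j → d i j ≠ 0)) ↔
    (IsTropIdem D ∧ tropRank D = n ∧ ∀ i j, i ≠ j → D i j < 0) := by
  haveI : Nonempty (Fin n) := ⟨⟨0, hn⟩⟩
  constructor
  · rintro ⟨h1, h2, h3, h4⟩
    have hdiagD : ∀ i, D i i = 0 := by
      intro i; rw [hD, h1 i, neg_zero]
    have hone : ∑ i, D i ((1 : Equiv.Perm (Fin n)) i) = 0 := by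
      simp [Equiv.Perm.one_apply, hdiagD]
    have hnp : ∀ σ : Equiv.Perm (Fin n), ∑ i, D i (σ i) ≤ 0 := by
      intro σ
      apply Finset.sum_nonpos
      intro i _
      rw [hD]
      linarith [h3 i (σ i)]
    have htD : tperm D = 0 := by
      unfold tperm
      apply le_antisymm (ciSup_le hnp)
      calc (0:ℝ) = ∑ i, D i ((1 : Equiv.Perm (Fin n)) i) := hone.symm
        _ ≤ _ := le_ciSup (f := fun σ : Equiv.Perm (Fin n) => ∑ i, D i (σ i)) (finBdd _) 1
    have uniqD : UniqPerm D := by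
      refine ⟨1, by rw [htD]; exact hone, ?_⟩
      intro σ hσ
      rw [htD] at hσ
      have hz := (Finset.sum_eq_zero_iff_of_nonpos (fun i _ => by
        rw [hD]; linarith [h3 i (σ i)])).mp hσ
      apply Equiv.ext
      intro x
      have hx := hz x (Finset.mem_univ x)
      rw [hD] at hx
      by_contra hne'
      have hxne : x ≠ σ x := by
        intro h; exact hne' (by rw [Equiv.Perm.one_apply]; exact h.symm)
      exact h4 x (σ x) hxne (by linarith)
    refine ⟨?_, ?_, ?_⟩
    · funext i j
      show (⨆ k, D i k + D k j) = D i j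
      apply le_antisymm
      · apply ciSup_le
        intro k
        rw [hD, hD, hD]
        linarith [h2 i j k]
      · calc D i j = D i j + D j j := by rw [hdiagD j, add_zero]
          _ ≤ ⨆ k, D i k + D k j :=
            le_ciSup (f := fun k => D i k + D k j) (finBdd _) j
    · have hmem : n ∈ {k : ℕ | ∃ r c : Fin k ↪ Fin n, UniqPerm (fun i j => D (r i) (c j))} :=
        ⟨Function.Embedding.refl _, Function.Embedding.refl _, uniqD⟩
      apply le_antisymm
      · apply csSup_le ⟨n, hmem⟩
        rintro k ⟨r, -, -⟩
        simpa using Fintype.card_le_of_embedding r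
      · exact le_csSup (rank_mem_bdd D) hmem
    · intro i j hij
      rw [hD]
      have := (h3 i j).lt_of_ne (Ne.symm (h4 i j hij))
      linarith
  · rintro ⟨idem, hrank, offd⟩
    have uniqD : UniqPerm D := uniq_of_rank D hrank
    have hdiag : ∀ i, D i i = 0 := diag_zero hn D idem uniqD
    have tri := trop_tri D idem
    refine ⟨?_, ?_, ?_, ?_⟩
    · intro i
      have := hdiag i
      rw [hD] at this
      linarith
    · intro i j k
      have := tri i j k
      rw [hD, hD, hD] at this
      linarith
    · intro i j
      by_cases h : i = j
      · subst h
        have := hdiag i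
        rw [hD] at this
        linarith
      · have := offd i j h
        rw [hD] at this
        linarith
    · intro i j hij hzero
      have := offd i j hij
      rw [hD, hzero] at this
      norm_num at this
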